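/- Let P > 0, let q : ℝ → ℝ be continuous, let λ₀ ∈ ℝ, and let u₀ : ℝ → ℝ be C² with u₀''(x) + (q(x) + λ₀)u₀(x) = 0 for all x ∈ [0,P] and u₀(0) = u₀(P) = 0. Then ∫₀^P |u₀'(x)|⁴ dx = 3 ∫₀^P (q(x) + λ₀) |u₀(x) u₀'(x)|² dx. -/

import Mathlib

open intervalIntegral

/-- **Integration-by-parts identity I.** For a Dirichlet solution `u₀` of
`u'' + (q + λ₀)u = 0` on `[0,P]`,
`∫₀^P |u₀'|⁴ dx = 3∫₀^P (q + λ₀)|u₀u₀'|² dx`. -/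
theorem quartic_derivative_identity
    (P : ℝ) (hP : 0 < P) (q : ℝ → ℝ) (hq : Continuous q)
    (lam₀ : ℝ) (u₀ : ℝ → ℝ) (hu₀C2 : ContDiff ℝ 2 u₀)
    (hode : ∀ x ∈ Set.Icc 0 P, deriv (deriv u₀) x + (q x + lam₀) * u₀ x = 0)
    (hu₀0 : u₀ 0 = 0) (hu₀P : u₀ P = 0) :
    ∫ x in (0:ℝ)..P, (deriv u₀ x) ^ 4
      = 3 * ∫ x in (0:ℝ)..P, (q x + lam₀) * (u₀ x * deriv u₀ x) ^ 2 := by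
  have hd1 : ContDiff ℝ 1 (deriv u₀) :=
    (contDiff_succ_iff_deriv.mp (by exact_mod_cast hu₀C2 : ContDiff ℝ (1 + 1) u₀)).2.2
  have hcu : Continuous u₀ := hu₀C2.continuous
  have hcu' : Continuous (deriv u₀) := hd1.continuous
  have hcu'' : Continuous (deriv (deriv u₀)) :=
    hd1.continuous_deriv le_rfl
  have hdu : ∀ x : ℝ, HasDerivAt u₀ (deriv u₀ x) x :=
    fun x => (hu₀C2.differentiable (by norm_num)).differentiableAt.hasDerivAt
  have hdu' : ∀ x : ℝ, HasDerivAt (deriv u₀) (deriv (deriv u₀) x) x :=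
    fun x => (hd1.differentiable (by norm_num)).differentiableAt.hasDerivAt
  have hF : ∀ x ∈ Set.uIcc (0:ℝ) P, HasDerivAt (fun x => u₀ x * (deriv u₀ x) ^ 3)
      ((deriv u₀ x) ^ 4 + 3 * ((q x + lam₀) * u₀ x * -1) * u₀ x * (deriv u₀ x) ^ 2) x := by
    intro x hx
    have hx' : x ∈ Set.Icc 0 P := by rwa [Set.uIcc_of_le hP.le] at hx
    have hodeX : deriv (deriv u₀) x = -((q x + lam₀) * u₀ x) := by
      have := hode x hx'; linarith
    have h : HasDerivAt (fun x => u₀ x * (deriv u₀ x) ^ 3) (deriv u₀ x * (deriv u₀ x) ^ 3 + u₀ x * (3 * deriv u₀ x ^ 2 * deriv (deriv u₀) x)) x := (hdu x).mul ((hdu' x).pow 3)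
    convert h using 1
    rw [hodeX]; ring
  have key : (∫ x in (0:ℝ)..P,
      ((deriv u₀ x) ^ 4 + 3 * ((q x + lam₀) * u₀ x * -1) * u₀ x * (deriv u₀ x) ^ 2))
      = u₀ P * (deriv u₀ P) ^ 3 - u₀ 0 * (deriv u₀ 0) ^ 3 := by
    apply intervalIntegral.integral_eq_sub_of_hasDerivAt hF
    apply Continuous.intervalIntegrable
    continuity
  rw [hu₀0, hu₀P] at key
  simp only [zero_mul, sub_zero] at key
  have hint1 : IntervalIntegrable (fun x => (deriv u₀ x) ^ 4) MeasureTheory.volume 0 P :=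
    (hcu'.pow 4).intervalIntegrable 0 P
  have hint2 : IntervalIntegrable
      (fun x => (q x + lam₀) * (u₀ x * deriv u₀ x) ^ 2) MeasureTheory.volume 0 P := by
    apply Continuous.intervalIntegrable
    continuity
  have hsplit : (∫ x in (0:ℝ)..P,
      ((deriv u₀ x) ^ 4 + 3 * ((q x + lam₀) * u₀ x * -1) * u₀ x * (deriv u₀ x) ^ 2))
      = (∫ x in (0:ℝ)..P, (deriv u₀ x) ^ 4)
        - 3 * ∫ x in (0:ℝ)..P, (q x + lam₀) * (u₀ x * deriv u₀ x) ^ 2 := by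
    rw [show (fun x => (deriv u₀ x) ^ 4 + 3 * ((q x + lam₀) * u₀ x * -1) * u₀ x * (deriv u₀ x) ^ 2)
        = fun x => (deriv u₀ x) ^ 4 - 3 * ((q x + lam₀) * (u₀ x * deriv u₀ x) ^ 2) from
      funext fun x => by ring]
    rw [intervalIntegral.integral_sub hint1 (hint2.const_mul 3),
      intervalIntegral.integral_const_mul]
  rw [hsplit] at key
  linarith
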